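/- arXiv:2001.06478 — 3 statements merged into one kernel-verified Lean document; each statement's English description precedes it below -/
import Mathlib

section
/- Let C be a free abelian group with basis B on which an involution τ acts freely, and let C* = Hom(C, ℤ) with the dual action τ^♯ defined by (τ^♯φ)(c) = φ(τc). Then ker(1+τ^♯) = im(1−τ^♯) and ker(1−τ^♯) = im(1+τ^♯) in C*. -/
/-- Dual exactness: for `C` free abelian on a basis `B` with fixed-point-free involution,
and `C* = Hom(C, ℤ)` with dual action `τ^♯φ = φ ∘ τ`, one has
`ker(1+τ^♯) = im(1−τ^♯)` and `ker(1−τ^♯) = im(1+τ^♯)`. -/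
theorem stmt1 (B : Type*) (e : B → B)
    (hinv : Function.Involutive e) (hfree : ∀ b, e b ≠ b) :
    (∀ φ : (B →₀ ℤ) →+ ℤ,
      φ + φ.comp (Finsupp.mapDomain.addMonoidHom e) = 0 ↔
        ∃ ψ : (B →₀ ℤ) →+ ℤ, φ = ψ - ψ.comp (Finsupp.mapDomain.addMonoidHom e)) ∧
    (∀ φ : (B →₀ ℤ) →+ ℤ,
      φ - φ.comp (Finsupp.mapDomain.addMonoidHom e) = 0 ↔
        ∃ ψ : (B →₀ ℤ) →+ ℤ, φ = ψ + ψ.comp (Finsupp.mapDomain.addMonoidHom e)) := by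
  classical
  -- Set up a setoid whose classes are the orbits {b, e b}
  have hr : Equivalence (fun a b : B => b = a ∨ b = e a) := by
    constructor
    · intro a; exact Or.inl rfl
    · intro a b h
      rcases h with h | h
      · subst h; exact Or.inl rfl
      · subst h; exact Or.inr (hinv a).symm
    · intro a b c hab hbc
      rcases hab with h | h
      · subst h; exact hbc
      · subst h
        rcases hbc with h | h
        · exact Or.inr h
        · exact Or.inl (h.trans (hinv a))
  let s : Setoid B := ⟨_, hr⟩
  let rep : B → B := fun b => (Quotient.mk s b).out
  have hrep : ∀ b, rep b = b ∨ rep b = e b := by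
    intro b
    have h : (fun a b : B => b = a ∨ b = e a) ((Quotient.mk s b).out) b :=
      Quotient.exact ((Quotient.mk s b).out_eq)
    rcases h with h | h
    · exact Or.inl h.symm
    · right
      have := congrArg e h
      rw [hinv] at this
      exact this.symm
  have hrepe : ∀ b, rep (e b) = rep b := by
    intro b
    have : (Quotient.mk s (e b)) = Quotient.mk s b :=
      Quotient.sound (Or.inr (hinv b).symm)
    simp [rep, this]
  set S : B → Prop := fun b => rep b = b with hS
  have key : ∀ b, ¬ S b ↔ S (e b) := by
    intro b
    constructor
    · intro h
      rcases hrep b with h1 | h1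
      · exact absurd h1 h
      · show rep (e b) = e b
        rw [hrepe]; exact h1
    · intro h h'
      have h3 : rep (e b) = rep b := hrepe b
      rw [h, h'] at h3
      exact hfree b h3
  have keye : ∀ b, S b → ¬ S (e b) := fun b hb h' => (key b).mpr h' hb
  -- evaluation of mapDomain comp at singles
  have hmd : ∀ (φ : (B →₀ ℤ) →+ ℤ) (b : B) (n : ℤ),
      (φ.comp (Finsupp.mapDomain.addMonoidHom e)) (Finsupp.single b n)
        = φ (Finsupp.single (e b) n) := by
    intro φ b n
    simp [Finsupp.mapDomain.addMonoidHom, Finsupp.mapDomain_single]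
  constructor
  · intro φ
    constructor
    · intro H
      have Hb : ∀ (b : B) (n : ℤ),
          φ (Finsupp.single b n) + φ (Finsupp.single (e b) n) = 0 := by
        intro b n
        have := congrArg (fun f : (B →₀ ℤ) →+ ℤ => f (Finsupp.single b n)) H
        simpa [hmd] using this
      refine ⟨Finsupp.liftAddHom fun b =>
        if S b then φ.comp (Finsupp.singleAddHom b) else 0, ?_⟩
      refine Finsupp.addHom_ext fun a n => ?_
      rw [AddMonoidHom.sub_apply, hmd]
      rw [Finsupp.liftAddHom_apply_single, Finsupp.liftAddHom_apply_single]
      by_cases h : S a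
      · rw [if_pos h, if_neg (keye a h)]
        simp
      · rw [if_neg h, if_pos ((key a).mp h)]
        simp only [AddMonoidHom.zero_apply, AddMonoidHom.comp_apply,
          Finsupp.singleAddHom_apply]
        linarith [Hb a n]
    · rintro ⟨ψ, rfl⟩
      refine Finsupp.addHom_ext fun a n => ?_
      simp only [AddMonoidHom.add_apply, AddMonoidHom.sub_apply, hmd,
        AddMonoidHom.zero_apply]
      rw [hinv]
      ring
  · intro φ
    constructor
    · intro H
      have Hb : ∀ (b : B) (n : ℤ),
          φ (Finsupp.single b n) - φ (Finsupp.single (e b) n) = 0 := by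
        intro b n
        have := congrArg (fun f : (B →₀ ℤ) →+ ℤ => f (Finsupp.single b n)) H
        simpa [hmd] using this
      refine ⟨Finsupp.liftAddHom fun b =>
        if S b then φ.comp (Finsupp.singleAddHom b) else 0, ?_⟩
      refine Finsupp.addHom_ext fun a n => ?_
      rw [AddMonoidHom.add_apply, hmd]
      rw [Finsupp.liftAddHom_apply_single, Finsupp.liftAddHom_apply_single]
      by_cases h : S a
      · rw [if_pos h, if_neg (keye a h)]
        simp
      · rw [if_neg h, if_pos ((key a).mp h)]
        simp only [AddMonoidHom.zero_apply, AddMonoidHom.comp_apply,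
          Finsupp.singleAddHom_apply]
        linarith [Hb a n]
    · rintro ⟨ψ, rfl⟩
      refine Finsupp.addHom_ext fun a n => ?_
      simp only [AddMonoidHom.add_apply, AddMonoidHom.sub_apply, hmd,
        AddMonoidHom.zero_apply]
      rw [hinv]
      ring
end

section
/- Combining the previous identities: ∂(vw(σ₁ × σ₂)) = τ_♯( w( τ_♯(σ₁ × σ₂) ) ) − v(σ₁ × σ₂) + vw(∂(σ₁ × σ₂)) for any oriented cell σ₁ × σ₂ of the deleted product. -/
/-- The bilinear product of chains: `fprod x y = Σ x_a y_b (a × b)`. -/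
noncomputable def fprod {S : Type*} (x y : S →₀ ℤ) : (S × S) →₀ ℤ :=
  x.sum fun a n => y.sum fun b k => Finsupp.single (a, b) (n * k)

lemma fprod_single_left {S : Type*} (a : S) (n : ℤ) (y : S →₀ ℤ) :
    fprod (Finsupp.single a n) y = y.sum fun b k => Finsupp.single (a, b) (n * k) := by
  unfold fprod
  rw [Finsupp.sum_single_index]
  simp

lemma fprod_single_right {S : Type*} (x : S →₀ ℤ) (b : S) (k : ℤ) :
    fprod x (Finsupp.single b k) = x.sum fun a n => Finsupp.single (a, b) (n * k) := by
  unfold fprod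
  refine Finsupp.sum_congr fun a _ => ?_
  rw [Finsupp.sum_single_index]
  simp

lemma fprod_single_single {S : Type*} (a b : S) :
    fprod (Finsupp.single a 1) (Finsupp.single b 1) = Finsupp.single (a, b) 1 := by
  rw [fprod_single_left, Finsupp.sum_single_index] <;> simp

lemma fprod_add_left {S : Type*} (x₁ x₂ y : S →₀ ℤ) :
    fprod (x₁ + x₂) y = fprod x₁ y + fprod x₂ y := by
  unfold fprod
  rw [Finsupp.sum_add_index']
  · intro a; simp
  · intro a n₁ n₂; simp [add_mul, Finsupp.single_add, Finsupp.sum_add]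

lemma fprod_sub_left {S : Type*} (x₁ x₂ y : S →₀ ℤ) :
    fprod (x₁ - x₂) y = fprod x₁ y - fprod x₂ y :=
  map_sub (AddMonoidHom.mk' (fun x => fprod x y) (fun x₁ x₂ => fprod_add_left x₁ x₂ y)) x₁ x₂

lemma fprod_add_right {S : Type*} (x y₁ y₂ : S →₀ ℤ) :
    fprod x (y₁ + y₂) = fprod x y₁ + fprod x y₂ := by
  unfold fprod
  rw [← Finsupp.sum_add]
  refine Finsupp.sum_congr fun a _ => ?_
  rw [Finsupp.sum_add_index']
  · intro b; simp
  · intro b k₁ k₂; simp [mul_add, Finsupp.single_add]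

lemma fprod_sub_right {S : Type*} (x y₁ y₂ : S →₀ ℤ) :
    fprod x (y₁ - y₂) = fprod x y₁ - fprod x y₂ :=
  map_sub (AddMonoidHom.mk' (fun y => fprod x y) (fun y₁ y₂ => fprod_add_right x y₁ y₂)) y₁ y₂

lemma fprod_mapDomain_left {S : Type*} (f : S → S) (x : S →₀ ℤ) (c : S) :
    fprod (Finsupp.mapDomain f x) (Finsupp.single c 1)
      = x.sum fun a n => Finsupp.single (f a, c) n := by
  rw [fprod_single_right, Finsupp.sum_mapDomain_index]
  · simp
  · intro a; simp
  · intro a n₁ n₂; simp [add_mul, Finsupp.single_add]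

lemma fprod_mapDomain_right {S : Type*} (f : S → S) (y : S →₀ ℤ) (c : S) :
    fprod (Finsupp.single c 1) (Finsupp.mapDomain f y)
      = y.sum fun b k => Finsupp.single (c, f b) k := by
  rw [fprod_single_left, Finsupp.sum_mapDomain_index]
  · simp
  · intro b; simp
  · intro b k₁ k₂; simp [mul_add, Finsupp.single_add]

lemma sign_lemma (n m : ℕ) : ((-1 : ℤ) ^ (n * m)) * ((-1 : ℤ) ^ ((m + 1) * n)) = (-1 : ℤ) ^ n := by
  rw [← pow_add]
  have h : n * m + (m + 1) * n = 2 * (n * m) + n := by ring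
  rw [h, pow_add, pow_mul]
  norm_num

/-- Combining the coning identities:
`∂(vw(σ₁ × σ₂)) = τ_♯(w(τ_♯(σ₁ × σ₂))) − v(σ₁ × σ₂) + vw(∂(σ₁ × σ₂))`, where
`v(a × b) = va × b`, `w(a × b) = wa × b`, `vw(a × b) = (−1)^{dim a} (va × wb)`,
`τ_♯` is the Koszul-signed factor exchange and `∂` the product boundary. -/
theorem stmt11 (S : Type*) (dim : S → ℕ)
    (d : (S →₀ ℤ) →+ (S →₀ ℤ))
    (hd : ∀ a : S, ∀ b ∈ (d (Finsupp.single a 1)).support, dim b + 1 = dim a)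
    (cv cw : S → S)
    (hdimv : ∀ a : S, dim (cv a) = dim a + 1)
    (hdimw : ∀ a : S, dim (cw a) = dim a + 1)
    (hconev : ∀ a : S, d (Finsupp.single (cv a) 1)
      = Finsupp.single a 1 - Finsupp.mapDomain cv (d (Finsupp.single a 1)))
    (hconew : ∀ a : S, d (Finsupp.single (cw a) 1)
      = Finsupp.single a 1 - Finsupp.mapDomain cw (d (Finsupp.single a 1)))
    (D : ((S × S) →₀ ℤ) →+ ((S × S) →₀ ℤ))
    (hD : ∀ a b : S, D (Finsupp.single (a, b) 1)
      = fprod (d (Finsupp.single a 1)) (Finsupp.single b 1)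
        + ((-1 : ℤ) ^ dim a) • fprod (Finsupp.single a 1) (d (Finsupp.single b 1)))
    (T : ((S × S) →₀ ℤ) →+ ((S × S) →₀ ℤ))
    (hT : ∀ a b : S, T (Finsupp.single (a, b) 1)
      = ((-1 : ℤ) ^ (dim a * dim b)) • Finsupp.single (b, a) 1)
    (V : ((S × S) →₀ ℤ) →+ ((S × S) →₀ ℤ))
    (hV : V = Finsupp.mapDomain.addMonoidHom fun p : S × S => (cv p.1, p.2))
    (W : ((S × S) →₀ ℤ) →+ ((S × S) →₀ ℤ))
    (hW : W = Finsupp.mapDomain.addMonoidHom fun p : S × S => (cw p.1, p.2))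
    (VW : ((S × S) →₀ ℤ) →+ ((S × S) →₀ ℤ))
    (hVW : ∀ a b : S, VW (Finsupp.single (a, b) 1)
      = ((-1 : ℤ) ^ dim a) • Finsupp.single (cv a, cw b) 1) :
    ∀ a b : S,
      D (VW (Finsupp.single (a, b) 1))
        = T (W (T (Finsupp.single (a, b) 1)))
          - V (Finsupp.single (a, b) 1)
          + VW (D (Finsupp.single (a, b) 1)) := by
  intro a b
  set x : S →₀ ℤ := d (Finsupp.single a 1) with hx
  set y : S →₀ ℤ := d (Finsupp.single b 1) with hy
  set ε : ℤ := (-1 : ℤ) ^ dim a with hε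
  have hε2 : ε * ε = 1 := by
    rw [hε, ← pow_add, ← two_mul, pow_mul]; norm_num
  have hεs : ((-1 : ℤ)) ^ (dim a + 1) = -ε := by rw [hε, pow_succ]; ring
  set S1 : (S × S) →₀ ℤ := x.sum fun a' n => Finsupp.single (cv a', cw b) n with hS1
  set S2 : (S × S) →₀ ℤ := y.sum fun b' k => Finsupp.single (cv a, cw b') k with hS2
  have hLHS : D (VW (Finsupp.single (a, b) 1))
      = ε • Finsupp.single (a, cw b) 1 - Finsupp.single (cv a, b) 1 - ε • S1 + S2 := by
    rw [hVW a b, ← hε, map_zsmul, hD (cv a) (cw b), hconev a, hconew b, hdimv a, hεs,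
        ← hx, ← hy, fprod_sub_left, fprod_sub_right, fprod_single_single, fprod_single_single,
        fprod_mapDomain_left, fprod_mapDomain_right, ← hS1, ← hS2]
    have h3 : ε * -ε = -1 := by rw [mul_neg, hε2]
    rw [smul_add, smul_sub, smul_smul, h3, smul_sub]
    simp only [neg_smul, one_smul]
    abel
  have hTWT : T (W (T (Finsupp.single (a, b) 1))) = ε • Finsupp.single (a, cw b) 1 := by
    rw [hT a b, map_zsmul, hW, Finsupp.mapDomain.addMonoidHom_apply, Finsupp.mapDomain_single,
        map_zsmul, hT (cw b) a, hdimw b, smul_smul, sign_lemma (dim a) (dim b), ← hε]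
  have hVs : V (Finsupp.single (a, b) 1) = Finsupp.single (cv a, b) 1 := by
    rw [hV, Finsupp.mapDomain.addMonoidHom_apply, Finsupp.mapDomain_single]
  have h1 : VW (fprod x (Finsupp.single b 1)) = (-ε) • S1 := by
    rw [fprod_single_right, map_finsuppSum, hS1, Finsupp.smul_sum]
    refine Finsupp.sum_congr fun a' ha' => ?_
    have hda : ((-1 : ℤ)) ^ dim a' = -ε := by
      rw [hε, ← hd a a' (hx ▸ ha'), pow_succ]; ring
    have hs : Finsupp.single (a', b) (x a' * 1) = (x a') • Finsupp.single (a', b) 1 := by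
      simp [Finsupp.smul_single']
    rw [hs, map_zsmul, hVW, hda, smul_comm]
    simp [Finsupp.smul_single']
  have h2 : VW (fprod (Finsupp.single a 1) y) = ε • S2 := by
    rw [fprod_single_left, map_finsuppSum, hS2, Finsupp.smul_sum]
    refine Finsupp.sum_congr fun b' _ => ?_
    have hs : Finsupp.single (a, b') (1 * y b') = (y b') • Finsupp.single (a, b') 1 := by
      simp [Finsupp.smul_single', mul_comm]
    rw [hs, map_zsmul, hVW, ← hε, smul_comm]
    simp [Finsupp.smul_single']
  have hVWD : VW (D (Finsupp.single (a, b) 1)) = -(ε • S1) + S2 := by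
    rw [hD a b, ← hx, ← hy, map_add, map_zsmul, h1, h2, smul_smul, hε2, one_smul, neg_smul]
  rw [hLHS, hTWT, hVs, hVWD]
  abel
end

section
/- Certificate for torsion cohomology classes, converse direction: Let C be a chain complex of finitely generated free abelian groups, and let φ be an i-cocycle such that φ(z) = 0 for every i-cycle z but [φ] ≠ 0 in H^i(Hom(C,ℤ)). Then there exist an integer n > 1, an i-chain c, and an (i−1)-cycle d such that ∂c = n·d and φ(c) ≢ 0 (mod n). -/
/-- Certificate for torsion cohomology classes (converse direction): over a chain complex
of finitely generated free abelian groups, if the `i`-cocycle `φ` vanishes on all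
`i`-cycles but `[φ] ≠ 0`, then there are `n > 1`, an `i`-chain `c` and an `(i−1)`-cycle
`e` with `∂c = n·e` and `φ(c) ≢ 0 (mod n)`. -/
theorem stmt13 (C2 C1 C0 Cm : Type*)
    [AddCommGroup C2] [AddCommGroup C1] [AddCommGroup C0] [AddCommGroup Cm]
    [Module.Free ℤ C2] [Module.Finite ℤ C2]
    [Module.Free ℤ C1] [Module.Finite ℤ C1]
    [Module.Free ℤ C0] [Module.Finite ℤ C0]
    [Module.Free ℤ Cm] [Module.Finite ℤ Cm]
    (d2 : C2 →+ C1) (d1 : C1 →+ C0) (d0 : C0 →+ Cm)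
    (hd21 : ∀ x, d1 (d2 x) = 0) (hd10 : ∀ x, d0 (d1 x) = 0)
    (φ : C1 →+ ℤ) (hcocycle : ∀ x, φ (d2 x) = 0)
    (hvanish : ∀ z : C1, d1 z = 0 → φ z = 0)
    (hnontriv : ¬ ∃ ψ : C0 →+ ℤ, ∀ x, φ x = ψ (d1 x)) :
    ∃ (n : ℤ) (c : C1) (e : C0),
      1 < n ∧ d0 e = 0 ∧ d1 c = n • e ∧ ¬ (n ∣ φ c) := by
  classical
  set D : C1 →ₗ[ℤ] C0 := d1.toIntLinearMap with hD
  set B : Submodule ℤ C0 := LinearMap.range D with hB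
  let b := Module.Free.chooseBasis ℤ C0
  obtain ⟨k, snf⟩ := B.smithNormalForm b
  -- choose preimages of the basis of B
  have hpre : ∀ i : Fin k, ∃ c : C1, d1 c = (snf.bN i : C0) := fun i => (snf.bN i).2
  choose c hc using hpre
  -- key: if φ vanishes on cycles, φ of any chain only depends on its boundary
  have hbd : ∀ x y : C1, d1 x = d1 y → φ x = φ y := by
    intro x y h
    have : φ (x - y) = 0 := hvanish _ (by rw [map_sub, h, sub_self])
    rw [map_sub, sub_eq_zero] at this
    exact this
  by_cases hdvd : ∀ i : Fin k, snf.a i ∣ φ (c i)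
  · -- build an extension ψ, contradicting hnontriv
    exfalso
    apply hnontriv
    let g : Module.Free.ChooseBasisIndex ℤ C0 → ℤ := fun j =>
      if h : ∃ i, snf.f i = j then φ (c h.choose) / snf.a h.choose else 0
    have hg : ∀ i : Fin k, g (snf.f i) = φ (c i) / snf.a i := by
      intro i
      have h : ∃ i', snf.f i' = snf.f i := ⟨i, rfl⟩
      have : h.choose = i := snf.f.injective h.choose_spec
      simp only [g, dif_pos h, this]
    let ψL : C0 →ₗ[ℤ] ℤ := snf.bM.constr ℤ g
    refine ⟨ψL.toAddMonoidHom, fun x => ?_⟩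
    -- ψL on the basis elements of B
    have hψbN : ∀ i : Fin k, ψL ((snf.bN i : C0)) = φ (c i) := by
      intro i
      rw [snf.snf i, map_smul, Module.Basis.constr_basis, hg, smul_eq_mul,
        Int.mul_ediv_cancel' (hdvd i)]
    -- decompose d1 x in the basis of B
    have hmem : d1 x ∈ B := ⟨x, rfl⟩
    set w : B := ⟨d1 x, hmem⟩ with hw
    have hrepr : (w : C0) = ∑ i, snf.bN.repr w i • (snf.bN i : C0) := by
      conv_lhs => rw [← snf.bN.sum_repr w]
      push_cast
      rfl
    set c' : C1 := ∑ i, snf.bN.repr w i • c i with hc'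
    have hdc' : d1 c' = d1 x := by
      rw [hc', map_sum]
      simp_rw [AddMonoidHom.map_zsmul, hc]
      rw [← hrepr]
    have hφ : φ x = φ c' := hbd x c' hdc'.symm
    have hr : ψL (d1 x) = ∑ i, snf.bN.repr w i * ψL ((snf.bN i : C0)) := by
      have hdw : d1 x = (w : C0) := rfl
      rw [hdw, hrepr, map_sum]
      simp_rw [map_zsmul, smul_eq_mul]
    have hl : φ c' = ∑ i, snf.bN.repr w i * φ (c i) := by
      rw [hc', map_sum]
      simp_rw [AddMonoidHom.map_zsmul, smul_eq_mul]
    simp only [LinearMap.toAddMonoidHom_coe]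
    rw [hφ, hl, hr]
    exact Finset.sum_congr rfl fun i _ => by rw [hψbN]
  · push_neg at hdvd
    obtain ⟨i, hi⟩ := hdvd
    have hd1ci : d1 (c i) = snf.a i • snf.bM (snf.f i) := by rw [hc, snf.snf i]
    have ha0 : snf.a i ≠ 0 := by
      intro h
      apply hi
      have : d1 (c i) = 0 := by rw [hd1ci, h, zero_smul]
      rw [hvanish _ this]
      exact dvd_zero _
    have ha1 : 1 < |snf.a i| := by
      rcases lt_or_ge 1 |snf.a i| with h | h
      · exact h
      · exfalso
        have h1 : |snf.a i| = 1 :=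
          le_antisymm h (Int.one_le_abs (by omega))
        rcases (abs_eq (by norm_num : (0:ℤ) ≤ 1)).mp h1 with h2 | h2 <;> rw [h2] at hi <;>
          [exact hi (one_dvd _); exact hi ((neg_dvd).mpr (one_dvd _))]
    refine ⟨|snf.a i|, c i, (snf.a i).sign • snf.bM (snf.f i), ha1, ?_, ?_, ?_⟩
    · have h0 : |snf.a i| • d0 ((snf.a i).sign • snf.bM (snf.f i)) = 0 := by
        rw [← AddMonoidHom.map_zsmul, smul_smul, mul_comm |snf.a i| (snf.a i).sign, Int.sign_mul_abs, ← hd1ci, hd10]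
      have hne : |snf.a i| ≠ 0 := by positivity
      rcases smul_eq_zero.mp h0 with h | h
      · exact absurd h hne
      · exact h
    · rw [hd1ci, smul_smul, mul_comm |snf.a i| (snf.a i).sign, Int.sign_mul_abs]
    · rw [abs_dvd]
      exact hi
end
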